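/- Let B : N -> N satisfy B(1) = 0 and B(n) = floor(n/2) + B(floor(n/2)) + B(ceil(n/2)) for n >= 2, and define Ftilde(x) = sum over i from 0 to infinity of (1/2^i)*Zigzag(2^i * x). Then for every positive natural number n and every natural number k with n <= 2^k, B(n) = n*k/2 - 2^(k-1) * Ftilde(n/2^k), as an equality of rationals/reals. -/

import Mathlib

noncomputable def Zigzag (x : ℝ) : ℝ := min (x - ⌊x⌋) (⌈x⌉ - x)

noncomputable def Ftilde (x : ℝ) : ℝ := ∑' i : ℕ, (1 / 2 ^ i) * Zigzag (2 ^ i * x)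

def Sfun (n k : ℕ) : ℕ := ∑ j ∈ Finset.range k, min (n % 2^(j+1)) (2^(j+1) - n % 2^(j+1))

lemma Zigzag_natCast (m : ℕ) : Zigzag (m : ℝ) = 0 := by
  simp [Zigzag]

lemma mod_odd (m P : ℕ) (hP : 0 < P) : (2*m+1) % (2*P) = 2*(m%P)+1 := by
  have h := Nat.div_add_mod m P
  have hlt : m % P < P := Nat.mod_lt _ hP
  have h2 : 2*m+1 = (2*(m%P)+1) + (m/P)*(2*P) := by
    calc 2*m+1 = 2*(P*(m/P)+m%P)+1 := by rw [h]
    _ = (2*(m%P)+1) + (m/P)*(2*P) := by ring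
  rw [h2, Nat.add_mul_mod_self_right, Nat.mod_eq_of_lt (by omega)]

lemma mod_succ (m P : ℕ) (hP : 0 < P) :
    (m+1) % P = m % P + 1 ∨ (m % P + 1 = P ∧ (m+1) % P = 0) := by
  have h := Nat.div_add_mod m P
  have hlt : m % P < P := Nat.mod_lt _ hP
  rcases Nat.lt_or_ge (m % P + 1) P with hc | hc
  · left
    have h2 : m+1 = (m%P+1) + (m/P)*P := by
      calc m+1 = P*(m/P)+m%P+1 := by rw [h]
      _ = (m%P+1) + (m/P)*P := by ring
    rw [h2, Nat.add_mul_mod_self_right, Nat.mod_eq_of_lt hc]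
  · right
    have he : m % P + 1 = P := by omega
    refine ⟨he, ?_⟩
    have h2 : m+1 = 0 + (m/P+1)*P := by
      calc m+1 = (P*(m/P)+m%P)+1 := by rw [h]
      _ = P*(m/P)+(m%P+1) := by ring
      _ = P*(m/P)+P := by rw [he]
      _ = 0 + (m/P+1)*P := by ring
    rw [h2, Nat.add_mul_mod_self_right]
    simp

lemma Sfun_even (m k : ℕ) : Sfun (2*m) (k+1) = 2 * Sfun m k := by
  unfold Sfun
  rw [Finset.sum_range_succ']
  have h0 : (2*m) % 2^(0+1) = 2 * (m % 1) := by
    simpa using Nat.mul_mod_mul_left 2 m 1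
  simp only [h0]
  rw [Finset.mul_sum]
  simp only [Nat.mod_one, Nat.mul_zero]
  have : ∀ j ∈ Finset.range k,
      min ((2*m) % 2^(j+1+1)) (2^(j+1+1) - (2*m) % 2^(j+1+1))
      = 2 * min (m % 2^(j+1)) (2^(j+1) - m % 2^(j+1)) := by
    intro j _
    have hP : (0:ℕ) < 2^(j+1) := Nat.pow_pos (by norm_num)
    have hmod : (2*m) % 2^(j+1+1) = 2 * (m % 2^(j+1)) := by
      rw [pow_succ, mul_comm (2^(j+1)) 2]
      exact Nat.mul_mod_mul_left 2 m (2^(j+1))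
    have hlt : m % 2^(j+1) < 2^(j+1) := Nat.mod_lt _ hP
    rw [hmod, pow_succ]
    omega
  rw [Finset.sum_congr rfl this]
  simp

lemma Sfun_odd (m k : ℕ) : Sfun (2*m+1) (k+1) = 1 + Sfun m k + Sfun (m+1) k := by
  unfold Sfun
  rw [Finset.sum_range_succ']
  have h0 : min ((2*m+1) % 2^(0+1)) (2^(0+1) - (2*m+1) % 2^(0+1)) = 1 := by
    simp [Nat.add_mul_mod_self_left]
  rw [h0]
  have key : ∀ j ∈ Finset.range k,
      min ((2*m+1) % 2^(j+1+1)) (2^(j+1+1) - (2*m+1) % 2^(j+1+1))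
      = min (m % 2^(j+1)) (2^(j+1) - m % 2^(j+1))
        + min ((m+1) % 2^(j+1)) (2^(j+1) - (m+1) % 2^(j+1)) := by
    intro j _
    set P := 2^(j+1) with hPdef
    have hP : (0:ℕ) < P := Nat.pow_pos (by norm_num)
    have hPe : ∃ t, P = 2*t := ⟨2^j, by rw [hPdef]; ring⟩
    obtain ⟨t, ht⟩ := hPe
    have hmod : (2*m+1) % 2^(j+1+1) = 2*(m%P)+1 := by
      rw [show (2:ℕ)^(j+1+1) = 2*P by rw [hPdef]; ring]
      exact mod_odd m P hP
    have hlt : m % P < P := Nat.mod_lt _ hP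
    have hsucc := mod_succ m P hP
    rw [hmod, show (2:ℕ)^(j+1+1) = 2*P by rw [hPdef]; ring]
    omega
  rw [Finset.sum_congr rfl key, Finset.sum_add_distrib]
  ring

lemma Sfun_one (k : ℕ) : Sfun 1 k = k := by
  unfold Sfun
  have : ∀ j ∈ Finset.range k,
      min (1 % 2^(j+1)) (2^(j+1) - 1 % 2^(j+1)) = 1 := by
    intro j _
    have h2 : (2:ℕ) ≤ 2^(j+1) := by
      calc (2:ℕ) = 2^1 := rfl
      _ ≤ 2^(j+1) := Nat.pow_le_pow_right (by norm_num) (by omega)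
    have : 1 % 2^(j+1) = 1 := Nat.mod_eq_of_lt (by omega)
    omega
  rw [Finset.sum_congr rfl this]
  simp

lemma ceil_half (n : ℕ) : (⌈(n : ℚ) / 2⌉).toNat = (n+1)/2 := by
  rcases Nat.even_or_odd n with ⟨m, hm⟩ | ⟨m, hm⟩
  · subst hm
    have : ((m + m : ℕ) : ℚ)/2 = (m:ℚ) := by push_cast; ring
    rw [this]
    simp
    omega
  · subst hm
    have hceil : ⌈((2*m+1 : ℕ) : ℚ)/2⌉ = (m:ℤ)+1 := by
      rw [Int.ceil_eq_iff]
      constructor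
      · push_cast; linarith
      · push_cast; linarith
    rw [hceil]
    omega

lemma B_S (B : ℕ → ℕ) (hB1 : B 1 = 0)
    (hB : ∀ n, 2 ≤ n → B n = n / 2 + B (n / 2) + B ((⌈(n : ℚ) / 2⌉).toNat)) :
    ∀ n, 1 ≤ n → ∀ k, n ≤ 2 ^ k → 2 * B n + Sfun n k = n * k := by
  intro n
  induction n using Nat.strong_induction_on with
  | _ n ih =>
    intro hn k hk
    rcases Nat.lt_or_ge n 2 with h1 | h2
    · have : n = 1 := by omega
      subst this
      rw [hB1, Sfun_one]
      omega
    · -- n ≥ 2, so k ≥ 1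
      have hk1 : 1 ≤ k := by
        by_contra hc
        have : k = 0 := by omega
        subst this
        simp at hk
        omega
      obtain ⟨k', rfl⟩ : ∃ k', k = k' + 1 := ⟨k - 1, by omega⟩
      have hrec := hB n h2
      rw [ceil_half] at hrec
      rcases Nat.even_or_odd n with ⟨m, hm⟩ | ⟨m, hm⟩
      · -- n = 2m
        have hm' : n = 2*m := by omega
        subst hm'
        have hm1 : 1 ≤ m := by omega
        have hmk : m ≤ 2^k' := by
          have : (2:ℕ)^(k'+1) = 2*2^k' := by ring
          omega
        have hdiv : 2*m/2 = m := by omega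
        have hdiv2 : (2*m+1)/2 = m := by omega
        rw [hdiv, hdiv2] at hrec
        have ihm := ih m (by omega) hm1 k' hmk
        rw [Sfun_even, hrec]
        zify at ihm ⊢
        linear_combination 2*ihm
      · -- n = 2m+1
        have hm' : n = 2*m+1 := by omega
        subst hm'
        have hm1 : 1 ≤ m := by omega
        have hmk : m + 1 ≤ 2^k' := by
          have h2k : (2:ℕ)^(k'+1) = 2*2^k' := by ring
          omega
        have hdiv : (2*m+1)/2 = m := by omega
        have hdiv2 : (2*m+1+1)/2 = m+1 := by omega
        rw [hdiv, hdiv2] at hrec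
        have ihm := ih m (by omega) hm1 k' (by omega)
        have ihm1 := ih (m+1) (by omega) (by omega) k' hmk
        rw [Sfun_odd, hrec]
        zify at ihm ihm1 ⊢
        linear_combination ihm + ihm1

lemma Zigzag_div (n P : ℕ) (hP : 0 < P) :
    (P:ℝ) * Zigzag ((n : ℝ) / P) = ((min (n % P) (P - n % P) : ℕ) : ℝ) := by
  have h := Nat.div_add_mod n P
  set a := n % P with hadef
  set q := n / P with hqdef
  have ha : a < P := Nat.mod_lt _ hP
  have hPR : (0:ℝ) < P := by exact_mod_cast hP
  have hx : (n:ℝ)/P = q + a/P := by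
    field_simp
    push_cast [← h]
    ring
  rcases Nat.eq_zero_or_pos a with ha0 | ha0
  · rw [hx, ha0]
    push_cast
    rw [zero_div, add_zero, Zigzag_natCast]
    simp [ha0]
  · have haP : (0:ℝ) < (a:ℝ)/P := by positivity
    have haP2 : (a:ℝ)/P < 1 := by
      rw [div_lt_one hPR]
      exact_mod_cast ha
    have hfl : ⌊(n:ℝ)/P⌋ = (q:ℤ) := by
      rw [hx, Int.floor_eq_iff]
      constructor
      · push_cast; linarith
      · push_cast; linarith
    have hcl : ⌈(n:ℝ)/P⌉ = (q:ℤ) + 1 := by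
      rw [hx, Int.ceil_eq_iff]
      constructor
      · push_cast; linarith
      · push_cast; linarith
    unfold Zigzag
    rw [hfl, hcl, hx]
    have e1 : (q:ℝ) + a/P - (q:ℤ) = a/P := by push_cast; ring
    have e2 : ((q:ℤ) + 1 : ℤ) = ((q:ℝ) + 1 : ℝ) := by push_cast; ring
    have e2' : (((q:ℤ) + 1 : ℤ) : ℝ) - ((q:ℝ) + a/P) = ((P:ℝ) - a)/P := by
      push_cast
      field_simp
      ring
    rw [e1, e2']
    have hmin : min ((a:ℝ)/P) (((P:ℝ)-a)/P) = min (a:ℝ) ((P:ℝ)-a) / P :=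
      min_div_div_right (le_of_lt hPR) _ _
    rw [hmin]
    rw [mul_div_cancel₀ _ (ne_of_gt hPR)]
    have : ((P - a : ℕ) : ℝ) = (P:ℝ) - a := by
      push_cast [Nat.cast_sub (le_of_lt ha)]
      ring
    rw [Nat.cast_min, this]

lemma Ftilde_dyadic (n k : ℕ) :
    (2:ℝ)^k * Ftilde ((n:ℝ)/2^k) = (Sfun n k : ℝ) := by
  unfold Ftilde
  rw [tsum_eq_sum (s := Finset.range k) (by
    intro i hi
    have hik : k ≤ i := by simpa using hi
    have hx : (2:ℝ)^i * ((n:ℝ)/2^k) = ((n * 2^(i-k) : ℕ):ℝ) := by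
      push_cast
      have hsplit : (2:ℝ)^i = 2^(i-k) * 2^k := by
        rw [← pow_add]
        congr 1
        omega
      rw [hsplit]
      have h2k : (2:ℝ)^k ≠ 0 := by positivity
      field_simp
    rw [hx, Zigzag_natCast, mul_zero])]
  rw [Finset.mul_sum]
  have step : ∀ i ∈ Finset.range k,
      (2:ℝ)^k * ((1/2^i) * Zigzag ((2:ℝ)^i * ((n:ℝ)/2^k)))
      = ((min (n % 2^(k-i)) (2^(k-i) - n % 2^(k-i)) : ℕ) : ℝ) := by
    intro i hi
    have hik : i < k := Finset.mem_range.mp hi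
    have hx : (2:ℝ)^i * ((n:ℝ)/2^k) = (n:ℝ)/((2^(k-i) : ℕ) : ℝ) := by
      have hsplit : (2:ℝ)^k = 2^i * 2^(k-i) := by
        rw [← pow_add]
        congr 1
        omega
      push_cast
      rw [hsplit]
      have h1 : (2:ℝ)^i ≠ 0 := by positivity
      have h2 : (2:ℝ)^(k-i) ≠ 0 := by positivity
      field_simp
    rw [hx]
    have hz := Zigzag_div n (2^(k-i)) (Nat.pow_pos (by norm_num))
    have hco : (2:ℝ)^k * (1/2^i) = ((2^(k-i) : ℕ) : ℝ) := by
      push_cast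
      rw [mul_one_div, div_eq_iff (pow_ne_zero _ (two_ne_zero)), ← pow_add]
      congr 1
      omega
    calc (2:ℝ)^k * ((1/2^i) * Zigzag ((n:ℝ)/((2^(k-i) : ℕ) : ℝ)))
        = ((2^(k-i) : ℕ) : ℝ) * Zigzag ((n:ℝ)/((2^(k-i) : ℕ) : ℝ)) := by
          rw [← hco]; ring
      _ = _ := hz
  rw [Finset.sum_congr rfl step]
  unfold Sfun
  rw [Nat.cast_sum]
  rw [← Finset.sum_range_reflect (fun j => ((min (n % 2^(j+1)) (2^(j+1) - n % 2^(j+1)) : ℕ) : ℝ)) k]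
  apply Finset.sum_congr rfl
  intro i hi
  have hik : i < k := Finset.mem_range.mp hi
  have hkk : k - 1 - i + 1 = k - i := by omega
  rw [hkk]

theorem B_eq_Ftilde (B : ℕ → ℕ) (hB1 : B 1 = 0)
    (hB : ∀ n, 2 ≤ n → B n = n / 2 + B (n / 2) + B ((⌈(n : ℚ) / 2⌉).toNat)) :
    ∀ n k : ℕ, 0 < n → n ≤ 2 ^ k →
      (B n : ℝ) = (n : ℝ) * k / 2 - (2 : ℝ) ^ ((k : ℤ) - 1) * Ftilde ((n : ℝ) / 2 ^ k) := by
  intro n k hn hk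
  have key := B_S B hB1 hB n hn k hk
  have hF := Ftilde_dyadic n k
  have hpow : (2:ℝ)^((k:ℤ)-1) = (2:ℝ)^k / 2 := by
    rw [zpow_sub₀ (two_ne_zero), zpow_natCast, zpow_one]
  rw [hpow]
  have hkey : 2*(B n : ℝ) + (Sfun n k : ℝ) = (n:ℝ)*(k:ℝ) := by
    exact_mod_cast congrArg (Nat.cast : ℕ → ℝ) key
  have h2 : (2:ℝ)^k / 2 * Ftilde ((n:ℝ)/2^k) = (Sfun n k : ℝ)/2 := by
    rw [← hF]
    ring
  rw [h2]
  linarith
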